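/- arXiv:2111.08467 — 2 statements merged into one kernel-verified Lean document; each statement's English description precedes it below -/
import Mathlib

section
/- Let π be a group, Φ: π → π^n ⋊ Σ_n a homomorphism, and let P = (δ_1,…,δ_n; ε) ∈ π^n ⋊ Σ_n. Let τ_P Φ denote the homomorphism γ ↦ P·Φ(γ)·P⁻¹. Then the map μ_P: π × {1,…,n} → π × {1,…,n} defined by μ_P(α,k) = (δ_k⁻¹ α, ε⁻¹(k)) descends to a well-defined bijection from the Reidemeister classes of τ_P Φ to the Reidemeister classes of Φ. -/
/-- The action of the symmetric group `Σ_n` on `π^n` by permuting coordinates: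
`σ · (β_1,…,β_n) = (β_{σ⁻¹(1)},…,β_{σ⁻¹(n)})`. -/
def permAut (π : Type*) [Group π] (n : ℕ) : Equiv.Perm (Fin n) →* MulAut (Fin n → π) where
  toFun σ :=
    { toFun := fun β => β ∘ σ.symm
      invFun := fun β => β ∘ σ
      left_inv := fun β => by funext k; simp
      right_inv := fun β => by funext k; simp
      map_mul' := fun β γ => rfl }
  map_one' := by ext β k; rfl
  map_mul' := fun σ ρ => by ext β k; show β ((σ * ρ).symm k) = β (ρ.symm (σ.symm k)); rw [Equiv.Perm.mul_def, Equiv.symm_trans_apply]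


/-- The Reidemeister (twisted conjugacy) relation on `π × {1,…,n}` associated to
a homomorphism `Ψ : π → π^n ⋊ Σ_n`. -/
def reidRel {π : Type*} [Group π] {n : ℕ}
    (Ψ : π →* (Fin n → π) ⋊[permAut π n] Equiv.Perm (Fin n)) :
    π × Fin n → π × Fin n → Prop :=
  fun p q => ∃ γ : π, (Ψ γ).right p.2 = q.2 ∧ p.1 = ((Ψ γ).left q.2)⁻¹ * q.1 * γ

/-- The set of Reidemeister classes of `Ψ`. -/
def ReidClasses {π : Type*} [Group π] {n : ℕ}
    (Ψ : π →* (Fin n → π) ⋊[permAut π n] Equiv.Perm (Fin n)) : Type _ :=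
  Quot (reidRel Ψ)

/-- The conjugated homomorphism `τ_P Φ : γ ↦ P · Φ(γ) · P⁻¹`. -/
def tau {π : Type*} [Group π] {n : ℕ}
    (P : (Fin n → π) ⋊[permAut π n] Equiv.Perm (Fin n))
    (Φ : π →* (Fin n → π) ⋊[permAut π n] Equiv.Perm (Fin n)) :
    π →* (Fin n → π) ⋊[permAut π n] Equiv.Perm (Fin n) :=
  ((MulAut.conj P).toMonoidHom).comp Φ

section Aux

variable {π : Type*} [Group π] {n : ℕ}

lemma tau_right (P : (Fin n → π) ⋊[permAut π n] Equiv.Perm (Fin n))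
    (Φ : π →* (Fin n → π) ⋊[permAut π n] Equiv.Perm (Fin n)) (γ : π) :
    (tau P Φ γ).right = P.right * (Φ γ).right * P.right⁻¹ := by
  simp [tau]

lemma tau_left (P : (Fin n → π) ⋊[permAut π n] Equiv.Perm (Fin n))
    (Φ : π →* (Fin n → π) ⋊[permAut π n] Equiv.Perm (Fin n)) (γ : π) (j : Fin n) :
    (tau P Φ γ).left j
      = P.left j * (Φ γ).left (P.right⁻¹ j)
        * (P.left (P.right ((Φ γ).right⁻¹ (P.right⁻¹ j))))⁻¹ := by
  show (P * Φ γ * P⁻¹).left j = _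
  simp only [SemidirectProduct.mul_left, SemidirectProduct.inv_left, SemidirectProduct.mul_right]
  simp [permAut, mul_assoc, Equiv.Perm.inv_def, Equiv.Perm.mul_def]

lemma sound_mu (P : (Fin n → π) ⋊[permAut π n] Equiv.Perm (Fin n))
    (Φ : π →* (Fin n → π) ⋊[permAut π n] Equiv.Perm (Fin n))
    {p q : π × Fin n} (h : reidRel (tau P Φ) p q) :
    reidRel Φ ((P.left p.2)⁻¹ * p.1, P.right⁻¹ p.2) ((P.left q.2)⁻¹ * q.1, P.right⁻¹ q.2) := by
  obtain ⟨γ, h1, h2⟩ := h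
  rw [tau_right] at h1
  refine ⟨γ, ?_, ?_⟩
  · simp only
    have := congrArg (P.right⁻¹ : Equiv.Perm (Fin n)) h1
    simpa using this
  · simp only
    rw [tau_left] at h2
    have hk : (Φ γ).right⁻¹ (P.right⁻¹ q.2) = P.right⁻¹ p.2 := by
      have := congrArg ((Φ γ).right⁻¹ * P.right⁻¹ : Equiv.Perm (Fin n)) h1
      simpa using this.symm
    rw [hk] at h2
    simp only [show ∀ x, P.right (P.right⁻¹ x) = x from fun x => Equiv.apply_symm_apply _ x] at h2
    rw [h2]
    group

lemma sound_nu (P : (Fin n → π) ⋊[permAut π n] Equiv.Perm (Fin n))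
    (Φ : π →* (Fin n → π) ⋊[permAut π n] Equiv.Perm (Fin n))
    {p q : π × Fin n} (h : reidRel Φ p q) :
    reidRel (tau P Φ) (P.left (P.right p.2) * p.1, P.right p.2)
      (P.left (P.right q.2) * q.1, P.right q.2) := by
  obtain ⟨γ, h1, h2⟩ := h
  refine ⟨γ, ?_, ?_⟩
  · simp only [tau_right]
    simp [h1]
  · simp only [tau_left]
    have hk : (Φ γ).right⁻¹ (P.right⁻¹ (P.right q.2)) = p.2 := by
      simp [← h1]
    rw [hk]
    simp only [Equiv.apply_symm_apply,
      Equiv.Perm.inv_def, Equiv.symm_apply_apply]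
    rw [h2]
    group

end Aux

theorem stmt5 (π : Type*) [Group π] (n : ℕ)
    (Φ : π →* (Fin n → π) ⋊[permAut π n] Equiv.Perm (Fin n))
    (P : (Fin n → π) ⋊[permAut π n] Equiv.Perm (Fin n)) :
    ∃ e : ReidClasses (tau P Φ) ≃ ReidClasses Φ,
      ∀ (α : π) (k : Fin n),
        e (Quot.mk _ (α, k)) = Quot.mk _ ((P.left k)⁻¹ * α, P.right⁻¹ k) := by
  refine ⟨{
    toFun := Quot.lift (fun p => Quot.mk (reidRel Φ) ((P.left p.2)⁻¹ * p.1, P.right⁻¹ p.2))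
      (fun p q h => Quot.sound (sound_mu P Φ h))
    invFun := Quot.lift (fun p => Quot.mk (reidRel (tau P Φ))
        (P.left (P.right p.2) * p.1, P.right p.2))
      (fun p q h => Quot.sound (sound_nu P Φ h))
    left_inv := by
      refine Quot.ind fun p => ?_
      simp
      rfl
    right_inv := by
      refine Quot.ind fun p => ?_
      simp
      rfl }, fun α k => rfl⟩
end

section
/- Let π act freely on X̃ and let f̃ = (f̃_1,…,f̃_n): X̃ → F_n(X̃,π) be Φ-equivariant, where F_n(X̃,π) consists of tuples whose coordinates lie in pairwise distinct π-orbits and Φ has coordinates (φ_1,…,φ_n;σ). If for some x̃ ∈ X̃, α,β,γ ∈ π and indices k,j one has α⁻¹ f̃_k(x̃) = x̃ and β⁻¹ f̃_j(γ x̃) = γ x̃, then k = σ_γ⁻¹(j) and α = φ_j(γ)⁻¹ β γ; i.e., the pairs (α,k) and (β,j) are Reidemeister equivalent for Φ. -/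
/-- The action formula of `π^n ⋊ Σ_n` on tuples. -/
def sdpAct {π : Type*} [Group π] {n : ℕ} {X : Type*} [MulAction π X]
    (A : (Fin n → π) ⋊[permAut π n] Equiv.Perm (Fin n)) (x : Fin n → X) :
    Fin n → X :=
  fun k => A.left k • x (A.right⁻¹ k)

/-- If `π` acts freely on `X̃`, `f̃` is `Φ`-equivariant with values in the orbit
configuration space (coordinates in pairwise distinct `π`-orbits), and
`α⁻¹ f̃_k(x̃) = x̃` and `β⁻¹ f̃_j(γ x̃) = γ x̃`, then `k = σ_γ⁻¹(j)` and
`α = φ_j(γ)⁻¹ β γ`, i.e. `(α,k)` and `(β,j)` are Reidemeister equivalent. -/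
theorem stmt17 (π : Type*) [Group π] (n : ℕ) (X : Type*) [MulAction π X]
    (hfree : ∀ (g : π) (x : X), g • x = x → g = 1)
    (Φ : π →* (Fin n → π) ⋊[permAut π n] Equiv.Perm (Fin n))
    (f : X → Fin n → X)
    (hconfig : ∀ (x : X) (k j : Fin n), k ≠ j → ∀ g : π, g • f x k ≠ f x j)
    (hequiv : ∀ (γ : π) (x : X), f (γ • x) = sdpAct (Φ γ) (f x))
    (x : X) (α β γ : π) (k j : Fin n)
    (hα : α⁻¹ • f x k = x) (hβ : β⁻¹ • f (γ • x) j = γ • x) :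
    k = (Φ γ).right⁻¹ j ∧ α = ((Φ γ).left j)⁻¹ * β * γ := by

  set m := (Φ γ).right⁻¹ j with hm
  set φ := (Φ γ).left j with hφ
  have hfj : f (γ • x) j = φ • f x m := by rw [hequiv]; rfl
  have hfk : f x k = α • x := by
    have := congrArg (α • ·) hα; simpa using this
  have hfm : f x m = (φ⁻¹ * β * γ) • x := by
    have := hβ
    rw [hfj] at this
    have : f x m = (φ⁻¹ * (β * γ)) • x := by
      rw [mul_smul, mul_smul, ← this, smul_smul, smul_smul]
      simp [mul_assoc]
    simpa [mul_assoc] using this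
  have hkm : k = m := by
    by_contra hne
    exact hconfig x m k (fun h => hne h.symm) ((α * (φ⁻¹ * β * γ)⁻¹))
      (by rw [hfm, hfk, smul_smul]; simp [mul_assoc])
  refine ⟨hkm, ?_⟩
  have : ((φ⁻¹ * β * γ)⁻¹ * α) • x = x := by
    rw [mul_smul, ← hfk, hkm, hfm, smul_smul]
    have h1 : γ⁻¹ * (β⁻¹ * φ) * (φ⁻¹ * β * γ) = 1 := by group
    have h1' : (φ⁻¹ * β * γ)⁻¹ * (φ⁻¹ * β * γ) = 1 := by group
    rw [h1', one_smul]
  have h1 := hfree _ _ this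
  have : α = φ⁻¹ * β * γ := by
    have := congrArg (fun g => (φ⁻¹ * β * γ) * g) h1
    simpa [mul_assoc] using this
  exact this
end
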